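/- For every integer k ≥ 0 and every t > 0, the series Σ_{j=k}^∞ σ₂(j,k)·k!·(−1)^{j−k}·q_j(t) converges and its sum equals i_k(t) := (1/t)·∫_0^t e^{−s}·(s^k/k!) ds. -/

import Mathlib

open MeasureTheory ProbabilityTheory Real

open MeasureTheory ProbabilityTheory Real

/-- Signless Stirling numbers of the first kind: coefficient of `x^j` in `x(x+1)⋯(x+k-1)`. -/
noncomputable def stirling1 (k j : ℕ) : ℝ :=
  (∏ i ∈ Finset.range k, (Polynomial.X + Polynomial.C (i : ℝ))).coeff j

/-- Stirling numbers of the second kind. -/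
def stirling2 : ℕ → ℕ → ℕ
  | 0, 0 => 1
  | 0, _ + 1 => 0
  | _ + 1, 0 => 0
  | n + 1, k + 1 => (k + 1) * stirling2 n (k + 1) + stirling2 n k

/-- `p_j(t) = e^{-t} Σ_{k≥j} (t^k/k!) σ₁(k,j)/k!` (terms with `k<j` vanish). -/
noncomputable def pfn (j : ℕ) (t : ℝ) : ℝ :=
  Real.exp (-t) * ∑' k : ℕ, t ^ k / (Nat.factorial k : ℝ) * (stirling1 k j / (Nat.factorial k : ℝ))

/-- `q_j(t) = e^{-t} Σ_{k≥0} (t^k/(k+1)!) Σ_{i=0}^k σ₁(i,j)/i!`. -/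
noncomputable def qfn (j : ℕ) (t : ℝ) : ℝ :=
  Real.exp (-t) * ∑' k : ℕ, t ^ k / (Nat.factorial (k + 1) : ℝ) *
    ∑ i ∈ Finset.range (k + 1), stirling1 i j / (Nat.factorial i : ℝ)

/-- `I(t,s) = ∫_s^t e^{-ξ}/ξ dξ`. -/
noncomputable def Ifun (t s : ℝ) : ℝ := ∫ ξ in s..t, Real.exp (-ξ) / ξ

/-- `I(s) = ∫_s^∞ e^{-ξ}/ξ dξ`. -/
noncomputable def Iinf (s : ℝ) : ℝ := ∫ ξ in Set.Ioi s, Real.exp (-ξ) / ξ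

/-- `I₂(t,s) = ∫_s^t e^{-ξ}/ξ² dξ`. -/
noncomputable def I2fun (t s : ℝ) : ℝ := ∫ ξ in s..t, Real.exp (-ξ) / ξ ^ 2

/-- `I₂(s) = ∫_s^∞ e^{-ξ}/ξ² dξ`. -/
noncomputable def I2inf (s : ℝ) : ℝ := ∫ ξ in Set.Ioi s, Real.exp (-ξ) / ξ ^ 2

/-- `J(t) = ∫_0^t (e^ξ - 1)/ξ dξ`. -/
noncomputable def Jfun (t : ℝ) : ℝ := ∫ ξ in (0:ℝ)..t, (Real.exp ξ - 1) / ξ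

/-! ### Auxiliary lemmas on Stirling numbers of the first kind -/

lemma s1_zero_zero : stirling1 0 0 = 1 := by simp [stirling1]

lemma s1_zero_succ (j : ℕ) : stirling1 0 (j + 1) = 0 := by
  simp [stirling1, Polynomial.coeff_one]

lemma s1_succ_zero (k : ℕ) : stirling1 (k + 1) 0 = k * stirling1 k 0 := by
  simp only [stirling1, Finset.prod_range_succ]
  rw [mul_add, Polynomial.coeff_add, Polynomial.coeff_mul_C]
  simp [Polynomial.coeff_mul_X_zero, mul_comm]

lemma s1_succ (k j : ℕ) : stirling1 (k + 1) (j + 1) = k * stirling1 k (j + 1) + stirling1 k j := by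
  simp only [stirling1, Finset.prod_range_succ]
  rw [mul_add, Polynomial.coeff_add, Polynomial.coeff_mul_C, Polynomial.coeff_mul_X]
  ring

lemma s1_eq_zero' : ∀ k j : ℕ, stirling1 k (k + j + 1) = 0 := by
  intro k
  induction k with
  | zero => intro j; simpa using s1_zero_succ j
  | succ k ih =>
    intro j
    have h : k + 1 + j + 1 = (k + (j + 1)) + 1 := by ring
    rw [h, s1_succ]
    have e1 : stirling1 k (k + (j + 1) + 1) = 0 := ih (j+1)
    have e2 : stirling1 k (k + (j + 1)) = 0 := by
      have := ih j; rw [show k + (j+1) = k + j + 1 by ring]; exact this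
    rw [e1, e2]; ring

lemma s1_eq_zero {k j : ℕ} (h : k < j) : stirling1 k j = 0 := by
  obtain ⟨m, rfl⟩ := Nat.exists_eq_add_of_lt h
  exact s1_eq_zero' k m

lemma s1_nonneg : ∀ k j : ℕ, 0 ≤ stirling1 k j := by
  intro k
  induction k with
  | zero => intro j; cases j <;> simp [s1_zero_zero, s1_zero_succ]
  | succ k ih =>
    intro j
    cases j with
    | zero =>
      rw [s1_succ_zero]; exact mul_nonneg (Nat.cast_nonneg k) (ih 0)
    | succ j =>
      rw [s1_succ]
      exact add_nonneg (mul_nonneg (Nat.cast_nonneg k) (ih (j+1))) (ih j)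

lemma s1_le_factorial : ∀ k j : ℕ, stirling1 k j ≤ Nat.factorial k := by
  intro k
  induction k with
  | zero => intro j; cases j <;> simp [s1_zero_zero, s1_zero_succ]
  | succ k ih =>
    intro j
    have hfact : ((k+1).factorial : ℝ) = (k + 1) * k.factorial := by
      push_cast [Nat.factorial_succ]; ring
    cases j with
    | zero =>
      rw [s1_succ_zero, hfact]
      have := ih 0
      have hk : (0:ℝ) ≤ k := Nat.cast_nonneg k
      have hf1 : (1:ℝ) ≤ k.factorial := by exact_mod_cast Nat.one_le_iff_ne_zero.mpr (Nat.factorial_ne_zero k)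
      nlinarith
    | succ j =>
      rw [s1_succ, hfact]
      have h1 := ih (j+1); have h2 := ih j
      have hk : (0:ℝ) ≤ k := Nat.cast_nonneg k
      nlinarith

/-! ### Auxiliary lemmas on Stirling numbers of the second kind -/

lemma s2_eq_zero : ∀ {n k : ℕ}, n < k → stirling2 n k = 0 := by
  intro n
  induction n with
  | zero => intro k hk; obtain ⟨k, rfl⟩ := Nat.exists_eq_add_of_lt hk; simp [stirling2]
  | succ n ih =>
    intro k hk
    obtain ⟨m, rfl⟩ := Nat.exists_eq_add_of_lt hk
    show stirling2 (n+1) (n + 1 + m + 1) = 0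
    have h1 : n < n + m + 1 + 1 := by omega
    have h2 : n < n + m + 1 := by omega
    have : n + 1 + m + 1 = (n + m + 1) + 1 := by ring
    rw [this]
    show (n + m + 1 + 1) * stirling2 n (n + m + 1 + 1) + stirling2 n (n + m + 1) = 0
    rw [ih h1, ih h2]; ring

lemma s2_bound : ∀ n k : ℕ, (Nat.factorial k * stirling2 n k : ℝ) ≤ (2 * k) ^ n := by
  intro n
  induction n with
  | zero =>
    intro k
    cases k with
    | zero => simp [stirling2]
    | succ k => simp [stirling2]
  | succ n ih =>
    intro k
    cases k with
    | zero => simp [stirling2]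
    | succ k =>
      have hrec : stirling2 (n+1) (k+1) = (k + 1) * stirling2 n (k + 1) + stirling2 n k := rfl
      rw [hrec]
      have h1 := ih (k+1)
      have h2 := ih k
      have hfact : ((k+1).factorial : ℝ) = (k + 1) * k.factorial := by
        push_cast [Nat.factorial_succ]; ring
      have hk : (0:ℝ) ≤ (k:ℝ) := Nat.cast_nonneg k
      have hpow : ((2:ℝ) * k) ^ n ≤ (2 * (k + 1)) ^ n := by
        apply pow_le_pow_left₀ (by linarith) (by linarith)
      have expand : ((2:ℝ) * (↑k + 1)) ^ (n + 1) = (2 * (k+1)) * (2 * (k+1)) ^ n := by ring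
      push_cast
      rw [expand]
      push_cast at h1 h2
      nlinarith [pow_nonneg (by linarith : (0:ℝ) ≤ 2 * ((k:ℝ)+1)) n]

/-! ### The inversion identity -/

lemma inv_key : ∀ (i : ℕ) (k : ℕ),
    ∑ j ∈ Finset.range (i + 1), (-1 : ℝ) ^ j * stirling1 i j * stirling2 j k
      = (-1) ^ i * (if i = k then 1 else 0) := by
  intro i
  induction i with
  | zero =>
    intro k
    cases k with
    | zero => simp [s1_zero_zero, stirling2]
    | succ k => simp [s1_zero_zero, show stirling2 0 (k+1) = 0 from rfl]
  | succ i ih =>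
    intro k
    set f : ℕ → ℝ := fun j => (-1) ^ j * stirling1 i j * stirling2 j k with hf
    have hT1 : ∑ j ∈ Finset.range (i + 1), (-1:ℝ)^j * stirling1 i (j+1) * stirling2 (j+1) k
        = stirling1 i 0 * stirling2 0 k - (-1)^i * (if i = k then 1 else 0) := by
      have h1 : ∑ j ∈ Finset.range (i + 2), f j
          = ∑ j ∈ Finset.range (i + 1), f (j + 1) + f 0 := Finset.sum_range_succ' f (i+1)
      have h2 : ∑ j ∈ Finset.range (i + 2), f j = ∑ j ∈ Finset.range (i + 1), f j := by
        rw [Finset.sum_range_succ]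
        simp [hf, s1_eq_zero (Nat.lt_succ_self i)]
      rw [ih k] at h2
      have h3 : ∑ j ∈ Finset.range (i + 1), f (j + 1)
          = - ∑ j ∈ Finset.range (i + 1), (-1:ℝ)^j * stirling1 i (j+1) * stirling2 (j+1) k := by
        rw [← Finset.sum_neg_distrib]
        apply Finset.sum_congr rfl
        intro j _
        simp only [hf, pow_succ]
        ring
      have hf0 : f 0 = stirling1 i 0 * stirling2 0 k := by simp [hf]
      rw [h1, h3, hf0] at h2
      linarith
    rw [Finset.sum_range_succ' _ (i + 1)]
    have hexp : ∀ j ∈ Finset.range (i + 1),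
        (-1:ℝ) ^ (j+1) * stirling1 (i+1) (j+1) * stirling2 (j+1) k
        = -((i:ℝ) * ((-1)^j * stirling1 i (j+1) * stirling2 (j+1) k))
          - (-1)^j * stirling1 i j * stirling2 (j+1) k := by
      intro j _
      rw [s1_succ, pow_succ]
      ring
    rw [Finset.sum_congr rfl hexp, Finset.sum_sub_distrib, Finset.sum_neg_distrib,
      ← Finset.mul_sum, hT1]
    simp only [pow_zero, one_mul, s1_succ_zero]
    cases k with
    | zero =>
      have hz : ∀ j ∈ Finset.range (i + 1),
          (-1:ℝ)^j * stirling1 i j * stirling2 (j+1) 0 = 0 := by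
        intro j _
        have : stirling2 (j+1) 0 = 0 := rfl
        rw [this]; push_cast; ring
      rw [Finset.sum_congr rfl hz, Finset.sum_const_zero,
        if_neg (show ¬ i + 1 = 0 by omega)]
      cases i with
      | zero => norm_num
      | succ i =>
        rw [if_neg (show ¬ i + 1 = 0 by omega)]
        ring
    | succ k' =>
      have hz : ∀ j ∈ Finset.range (i + 1),
          (-1:ℝ)^j * stirling1 i j * stirling2 (j+1) (k'+1)
          = (k'+1) * ((-1)^j * stirling1 i j * stirling2 j (k'+1))
            + (-1)^j * stirling1 i j * stirling2 j k' := by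
        intro j _
        have : stirling2 (j+1) (k'+1) = (k' + 1) * stirling2 j (k' + 1) + stirling2 j k' := rfl
        rw [this]; push_cast; ring
      rw [Finset.sum_congr rfl hz, Finset.sum_add_distrib, ← Finset.mul_sum, ih, ih]
      by_cases h2 : i = k'
      · subst h2
        rw [if_neg (show ¬ i = i + 1 by omega), if_pos rfl,
          if_pos (rfl : i + 1 = i + 1)]
        ring
      · by_cases h1 : i = k' + 1
        · subst h1
          rw [if_pos rfl, if_neg (show ¬ k' + 1 = k' by omega),
            if_neg (show ¬ k' + 1 + 1 = k' + 1 by omega)]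
          push_cast
          ring
        · rw [if_neg h1, if_neg h2, if_neg (show ¬ i + 1 = k' + 1 by omega)]
          ring

lemma inv_shifted (k i m : ℕ) (him : i ≤ m) :
    ∑ j ∈ Finset.range (m + 1), (-1 : ℝ) ^ j * stirling2 (k + j) k * stirling1 i (k + j)
      = if i = k then 1 else 0 := by
  set f : ℕ → ℝ := fun j => (-1) ^ j * stirling1 i j * stirling2 j k with hf
  have hsplit : ∑ j ∈ Finset.range (k + (m + 1)), f j
      = ∑ j ∈ Finset.range k, f j + ∑ j ∈ Finset.range (m + 1), f (k + j) :=
    Finset.sum_range_add f k (m + 1)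
  have hlow : ∑ j ∈ Finset.range k, f j = 0 := by
    apply Finset.sum_eq_zero
    intro j hj
    have : stirling2 j k = 0 := s2_eq_zero (Finset.mem_range.mp hj)
    simp [hf, this]
  have htot : ∑ j ∈ Finset.range (k + (m + 1)), f j = (-1)^i * (if i = k then 1 else 0) := by
    rw [← inv_key i k]
    apply (Finset.sum_subset _ _).symm
    · intro x hx
      rw [Finset.mem_range] at *
      omega
    · intro x _ hx
      rw [Finset.mem_range] at hx
      have : i < x := by omega
      simp [hf, s1_eq_zero this]
  have hterm : ∀ j, f (k + j) = (-1:ℝ)^k * ((-1)^j * stirling2 (k+j) k * stirling1 i (k+j)) := by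
    intro j
    simp only [hf, pow_add]
    ring
  have : ∑ j ∈ Finset.range (m + 1), f (k + j)
      = (-1:ℝ)^k * ∑ j ∈ Finset.range (m + 1), (-1:ℝ)^j * stirling2 (k+j) k * stirling1 i (k+j) := by
    rw [Finset.mul_sum]
    exact Finset.sum_congr rfl fun j _ => hterm j
  rw [this, hlow, zero_add, htot] at hsplit
  have hne : ((-1:ℝ)^k) ≠ 0 := pow_ne_zero _ (by norm_num)
  by_cases h : i = k
  · subst h
    rw [if_pos rfl] at hsplit ⊢
    exact (mul_left_cancel₀ hne hsplit).symm
  · rw [if_neg h] at hsplit ⊢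
    rw [mul_zero] at hsplit
    rcases mul_eq_zero.mp hsplit.symm with h' | h'
    · exact absurd h' hne
    · exact h'

/-! ### Analytic helper lemmas -/

lemma deriv_partial_exp (k : ℕ) (s : ℝ) :
    HasDerivAt (fun s : ℝ => -(Real.exp (-s) * ∑ n ∈ Finset.range (k+1), s ^ n / n.factorial))
      (Real.exp (-s) * s ^ k / k.factorial) s := by
  have hexp : HasDerivAt (fun s : ℝ => Real.exp (-s)) (-Real.exp (-s)) s := by
    simpa [Function.comp_def] using (Real.hasDerivAt_exp (-s)).comp s (hasDerivAt_neg s)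
  have hP : HasDerivAt (fun s : ℝ => ∑ n ∈ Finset.range (k+1), s ^ n / n.factorial)
      (∑ n ∈ Finset.range k, s ^ n / n.factorial) s := by
    have h1 : HasDerivAt (fun s : ℝ => ∑ n ∈ Finset.range (k+1), s ^ n / n.factorial)
        (∑ n ∈ Finset.range (k+1), (n : ℝ) * s ^ (n - 1) / n.factorial) s := by
      apply HasDerivAt.fun_sum
      intro n _
      simpa [div_eq_mul_inv] using (hasDerivAt_pow n s).div_const (n.factorial : ℝ)
    convert h1 using 1
    rw [Finset.sum_range_succ' (fun n => (n:ℝ) * s ^ (n-1) / n.factorial) k]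
    simp only [Nat.cast_zero, zero_mul, zero_div, add_zero, Nat.cast_ofNat]
    apply Finset.sum_congr rfl
    intro n _
    have : ((n+1).factorial : ℝ) = (n + 1) * n.factorial := by
      push_cast [Nat.factorial_succ]; ring
    rw [this]
    simp only [Nat.add_sub_cancel, Nat.cast_add, Nat.cast_one]
    have hn : ((n:ℝ) + 1) ≠ 0 := by positivity
    field_simp
  have := (hexp.mul hP).neg
  refine this.congr_deriv ?_
  have hsub : (∑ n ∈ Finset.range (k+1), s ^ n / n.factorial)
      - ∑ n ∈ Finset.range k, s ^ n / n.factorial = s ^ k / k.factorial := by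
    rw [Finset.sum_range_succ]; ring
  linear_combination (Real.exp (-s)) * hsub

lemma int_exp_pow (k : ℕ) (t : ℝ) :
    (∫ s in (0:ℝ)..t, Real.exp (-s) * s ^ k / k.factorial)
      = 1 - Real.exp (-t) * ∑ n ∈ Finset.range (k+1), t ^ n / n.factorial := by
  have h := intervalIntegral.integral_eq_sub_of_hasDerivAt
    (f := fun s : ℝ => -(Real.exp (-s) * ∑ n ∈ Finset.range (k+1), s ^ n / n.factorial))
    (f' := fun s => Real.exp (-s) * s ^ k / k.factorial)
    (fun x _ => deriv_partial_exp k x)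
    (Continuous.intervalIntegrable (by fun_prop) 0 t)
  have h0 : ∑ n ∈ Finset.range (k+1), (0:ℝ) ^ n / n.factorial = 1 := by
    rw [Finset.sum_eq_single 0]
    · simp
    · intro n _ hn
      obtain ⟨m, rfl⟩ := Nat.exists_eq_succ_of_ne_zero hn
      simp [zero_pow]
    · simp
  rw [h]
  norm_num [h0]
  ring

lemma summable_succ_pow_fact (x : ℝ) :
    Summable (fun m : ℕ => ((m : ℝ) + 1) * (x ^ m / m.factorial)) := by
  have h1 := Real.summable_pow_div_factorial x
  have h2 : Summable (fun m : ℕ => (m : ℝ) * (x ^ m / m.factorial)) := by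
    rw [← summable_nat_add_iff 1]
    have : (fun m : ℕ => ((m : ℕ) + 1 : ℝ) * (x ^ (m+1) / (m+1).factorial))
        = fun m : ℕ => x * (x ^ m / m.factorial) := by
      funext m
      have : ((m+1).factorial : ℝ) = (m + 1) * m.factorial := by
        push_cast [Nat.factorial_succ]; ring
      rw [this]
      have hm : ((m:ℝ) + 1) ≠ 0 := by positivity
      have hf : (m.factorial : ℝ) ≠ 0 := by positivity
      field_simp
      ring
    simp only [Nat.cast_add, Nat.cast_one]
    rw [show (fun m : ℕ => ((m : ℝ) + 1) * (x ^ (m+1) / ((m+1).factorial : ℝ))) = _ from this]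
    exact h1.mul_left x
  have := h2.add h1
  convert this using 1
  funext m
  ring

/-- The double-indexed family of terms: index `(j, m)`. -/
noncomputable def gterm (k : ℕ) (t : ℝ) (p : ℕ × ℕ) : ℝ :=
  (stirling2 (k + p.1) k : ℝ) * (Nat.factorial k : ℝ) * (-1) ^ p.1 *
    (Real.exp (-t) * (t ^ p.2 / (Nat.factorial (p.2 + 1) : ℝ) *
      ∑ i ∈ Finset.range (p.2 + 1), stirling1 i (k + p.1) / (Nat.factorial i : ℝ)))

lemma rowSum_zero {m j : ℕ} (h : m < j) :
    ∑ i ∈ Finset.range (m + 1), stirling1 i j / (Nat.factorial i : ℝ) = 0 := by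
  apply Finset.sum_eq_zero
  intro i hi
  rw [Finset.mem_range] at hi
  rw [s1_eq_zero (by omega : i < j)]
  simp

lemma gterm_bound (k : ℕ) {t : ℝ} (ht : 0 < t) (j m : ℕ) :
    |gterm k t (j, m)|
      ≤ (if j ≤ m then ((2 * (k:ℝ) + 1) * t) ^ m / m.factorial else 0) := by
  by_cases hjm : k + j ≤ m
  · have hjm' : j ≤ m := by omega
    rw [if_pos hjm']
    have hE : Real.exp (-t) ≤ 1 := Real.exp_le_one_iff.mpr (by linarith)
    have hE0 : (0:ℝ) < Real.exp (-t) := Real.exp_pos _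
    set C : ℝ := t ^ m / (Nat.factorial (m + 1) : ℝ) with hC
    set D : ℝ := ∑ i ∈ Finset.range (m + 1), stirling1 i (k + j) / (Nat.factorial i : ℝ) with hD
    have hC0 : 0 ≤ C := by positivity
    have hD0 : 0 ≤ D := by
      apply Finset.sum_nonneg
      intro i _
      exact div_nonneg (s1_nonneg i (k+j)) (Nat.cast_nonneg _)
    have hA0 : (0:ℝ) ≤ (stirling2 (k + j) k : ℝ) * (Nat.factorial k : ℝ) := by positivity
    have habs : |gterm k t (j, m)|
        = (stirling2 (k + j) k : ℝ) * (Nat.factorial k : ℝ) * (Real.exp (-t) * (C * D)) := by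
      have hrepr : gterm k t (j, m)
          = (-1:ℝ)^j * ((stirling2 (k + j) k : ℝ) * (Nat.factorial k : ℝ)
              * (Real.exp (-t) * (C * D))) := by
        simp only [gterm, hC, hD]
        ring
      rw [hrepr, abs_mul, abs_pow, abs_neg, abs_one, one_pow, one_mul, abs_eq_self.mpr]
      positivity
    -- bounds
    have hA : (stirling2 (k + j) k : ℝ) * (Nat.factorial k : ℝ) ≤ (2 * (k:ℝ) + 1) ^ m := by
      calc (stirling2 (k + j) k : ℝ) * (Nat.factorial k : ℝ)
          = (Nat.factorial k : ℝ) * (stirling2 (k + j) k : ℝ) := by ring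
        _ ≤ (2 * (k:ℝ)) ^ (k + j) := s2_bound (k + j) k
        _ ≤ (2 * (k:ℝ) + 1) ^ (k + j) := by
            apply pow_le_pow_left₀ (by positivity) (by linarith)
        _ ≤ (2 * (k:ℝ) + 1) ^ m := by
            apply pow_le_pow_right₀ (by linarith [Nat.cast_nonneg (α := ℝ) k]) hjm
    have hDle : D ≤ (m:ℝ) + 1 := by
      have : D ≤ ∑ i ∈ Finset.range (m + 1), (1:ℝ) := by
        apply Finset.sum_le_sum
        intro i _
        rw [div_le_one (by positivity : (0:ℝ) < (Nat.factorial i : ℝ))]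
        exact s1_le_factorial i (k+j)
      simpa using this
    have hstep1 : Real.exp (-t) * (C * D) ≤ C * ((m:ℝ) + 1) := by
      calc Real.exp (-t) * (C * D) ≤ 1 * (C * D) :=
            mul_le_mul_of_nonneg_right hE (by positivity)
        _ = C * D := one_mul _
        _ ≤ C * ((m:ℝ) + 1) := mul_le_mul_of_nonneg_left hDle hC0
    have hstep2 : |gterm k t (j, m)| ≤ (2 * (k:ℝ) + 1) ^ m * (C * ((m:ℝ) + 1)) := by
      rw [habs]
      apply mul_le_mul hA hstep1 (by positivity) (by positivity)
    refine hstep2.trans (le_of_eq ?_)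
    have hfact : ((m+1).factorial : ℝ) = ((m:ℝ) + 1) * m.factorial := by
      push_cast [Nat.factorial_succ]; ring
    rw [hC, hfact, mul_pow]
    have h1 : ((m:ℝ) + 1) ≠ 0 := by positivity
    have h2 : ((m.factorial : ℝ)) ≠ 0 := by positivity
    field_simp
  · have hval : gterm k t (j, m) = 0 := by
      simp only [gterm]
      rw [rowSum_zero (by omega : m < k + j)]
      ring
    rw [hval, abs_zero]
    by_cases hjm' : j ≤ m
    · rw [if_pos hjm']
      positivity
    · rw [if_neg hjm']

noncomputable def ub (k : ℕ) (t : ℝ) (p : ℕ × ℕ) : ℝ :=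
  if p.1 ≤ p.2 then ((2 * (k:ℝ) + 1) * t) ^ p.2 / p.2.factorial else 0
lemma summable_ubound (k : ℕ) {t : ℝ} (ht : 0 < t) : Summable (ub k t) := by
  set x : ℝ := (2 * (k:ℝ) + 1) * t with hx
  have hx0 : (0:ℝ) ≤ x := by positivity
  set w : ℕ × ℕ → ℝ := fun q => if q.2 ≤ q.1 then x ^ q.1 / q.1.factorial else 0 with hw
  have hw0 : ∀ q, (0:ℝ) ≤ w q := by
    intro q
    simp only [hw]
    split
    · positivity
    · exact le_refl 0
  have hfib : ∀ m : ℕ, Summable (fun j => w (m, j)) := by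
    intro m
    apply summable_of_ne_finset_zero (s := Finset.range (m+1))
    intro j hj
    rw [Finset.mem_range] at hj
    simp only [hw]
    rw [if_neg (by omega)]
  have hsums : ∀ m : ℕ, (∑' j : ℕ, w (m, j)) = ((m:ℝ)+1) * (x ^ m / m.factorial) := by
    intro m
    rw [tsum_eq_sum (s := Finset.range (m+1))
      (by intro j hj; rw [Finset.mem_range] at hj; simp only [hw]; rw [if_neg (by omega)])]
    have h1 : ∀ j ∈ Finset.range (m+1), w (m, j) = x ^ m / m.factorial := by
      intro j hj
      rw [Finset.mem_range] at hj
      simp only [hw]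
      rw [if_pos (by omega)]
    rw [Finset.sum_congr rfl h1, Finset.sum_const, Finset.card_range, nsmul_eq_mul]
    push_cast
    ring
  have hWsum : Summable w := by
    rw [summable_prod_of_nonneg hw0]
    refine ⟨hfib, ?_⟩
    apply Summable.congr (summable_succ_pow_fact x)
    intro m
    exact (hsums m).symm
  have h := (Equiv.prodComm ℕ ℕ).summable_iff.mpr hWsum
  apply Summable.congr h
  intro p
  rcases p with ⟨j, m⟩
  simp only [Function.comp, Equiv.prodComm_apply, Prod.swap, hw, ub]
  rw [hx]

lemma summable_gterm (k : ℕ) {t : ℝ} (ht : 0 < t) : Summable (gterm k t) := by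
  rw [← summable_abs_iff]
  apply Summable.of_nonneg_of_le (fun p => abs_nonneg _) _ (summable_ubound k ht)
  intro p
  rcases p with ⟨j, m⟩
  exact gterm_bound k ht j m

/-- Inversion formula for the `q_j`'s: for every `k ≥ 0` and `t > 0`,
`Σ_{j=k}^∞ σ₂(j,k)·k!·(-1)^{j-k}·q_j(t)` converges with sum
`i_k(t) = (1/t)∫_0^t e^{-s} s^k/k! ds`. -/
theorem stmt10 (k : ℕ) (t : ℝ) (ht : 0 < t) :
    HasSum (fun j : ℕ =>
        (stirling2 (k + j) k : ℝ) * (Nat.factorial k : ℝ) * (-1) ^ j * qfn (k + j) t)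
      ((1 / t) * ∫ s in (0:ℝ)..t, Real.exp (-s) * s ^ k / (Nat.factorial k : ℝ)) := by
  have hg : Summable (gterm k t) := summable_gterm k ht
  -- each row sums to the corresponding term of the series
  have hrow : ∀ j : ℕ, HasSum (fun m => gterm k t (j, m))
      ((stirling2 (k + j) k : ℝ) * (Nat.factorial k : ℝ) * (-1) ^ j * qfn (k + j) t) := by
    intro j
    have h1 : Summable (fun m => gterm k t (j, m)) := hg.prod_factor j
    have h2 : ∑' m : ℕ, gterm k t (j, m)
        = (stirling2 (k + j) k : ℝ) * (Nat.factorial k : ℝ) * (-1) ^ j * qfn (k + j) t := by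
      simp only [gterm, qfn]
      rw [tsum_mul_left, tsum_mul_left]
    exact h2 ▸ h1.hasSum
  have hmain := HasSum.prod_fiberwise hg.hasSum hrow
  -- it remains to identify the total sum
  have hswap : Summable (fun q : ℕ × ℕ => gterm k t ((Equiv.prodComm ℕ ℕ) q)) :=
    (Equiv.prodComm ℕ ℕ).summable_iff.mpr hg
  have h3 : ∑' p : ℕ × ℕ, gterm k t p = ∑' (m : ℕ) (j : ℕ), gterm k t (j, m) := by
    rw [← Equiv.tsum_eq (Equiv.prodComm ℕ ℕ) (gterm k t)]
    rw [Summable.tsum_prod' hswap (fun m => hswap.prod_factor m)]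
    rfl
  -- column sums
  have hcol : ∀ m : ℕ, (∑' j : ℕ, gterm k t (j, m))
      = if k ≤ m then Real.exp (-t) * (t ^ m / (Nat.factorial (m+1) : ℝ)) else 0 := by
    intro m
    rw [tsum_eq_sum (s := Finset.range (m+1)) (by
      intro j hj
      rw [Finset.mem_range] at hj
      simp only [gterm]
      rw [rowSum_zero (by omega : m < k + j)]
      ring)]
    have hterm : ∀ j ∈ Finset.range (m+1), gterm k t (j, m)
        = ∑ i ∈ Finset.range (m+1),
            Real.exp (-t) * (t ^ m / (Nat.factorial (m+1) : ℝ)) *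
              ((Nat.factorial k : ℝ) / (Nat.factorial i : ℝ) *
                ((-1:ℝ)^j * stirling2 (k+j) k * stirling1 i (k+j))) := by
      intro j _
      simp only [gterm]
      rw [Finset.mul_sum, Finset.mul_sum, Finset.mul_sum]
      apply Finset.sum_congr rfl
      intro i _
      ring
    rw [Finset.sum_congr rfl hterm, Finset.sum_comm]
    have hinner : ∀ i ∈ Finset.range (m+1),
        (∑ j ∈ Finset.range (m+1),
          Real.exp (-t) * (t ^ m / (Nat.factorial (m+1) : ℝ)) *
            ((Nat.factorial k : ℝ) / (Nat.factorial i : ℝ) *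
              ((-1:ℝ)^j * stirling2 (k+j) k * stirling1 i (k+j))))
        = if i = k then Real.exp (-t) * (t ^ m / (Nat.factorial (m+1) : ℝ)) *
            ((Nat.factorial k : ℝ) / (Nat.factorial i : ℝ)) else 0 := by
      intro i hi
      rw [Finset.mem_range] at hi
      have : ∀ j ∈ Finset.range (m+1),
          Real.exp (-t) * (t ^ m / (Nat.factorial (m+1) : ℝ)) *
            ((Nat.factorial k : ℝ) / (Nat.factorial i : ℝ) *
              ((-1:ℝ)^j * stirling2 (k+j) k * stirling1 i (k+j)))
          = Real.exp (-t) * (t ^ m / (Nat.factorial (m+1) : ℝ)) *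
              ((Nat.factorial k : ℝ) / (Nat.factorial i : ℝ)) *
              ((-1:ℝ)^j * stirling2 (k+j) k * stirling1 i (k+j)) := by
        intro j _
        ring
      rw [Finset.sum_congr rfl this, ← Finset.mul_sum, inv_shifted k i m (by omega)]
      split
      · rw [mul_one]
      · rw [mul_zero]
    rw [Finset.sum_congr rfl hinner]
    rw [Finset.sum_ite_eq' (Finset.range (m+1)) k]
    simp only [Finset.mem_range]
    by_cases hkm : k ≤ m
    · rw [if_pos (by omega), if_pos hkm, div_self (by positivity : (Nat.factorial k : ℝ) ≠ 0),
        mul_one]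
    · rw [if_neg (by omega), if_neg hkm]
  -- sum the column sums
  set v : ℕ → ℝ := fun m => if k ≤ m then Real.exp (-t) * (t ^ m / (Nat.factorial (m+1) : ℝ)) else 0
    with hv
  have ht' : t ≠ 0 := ne_of_gt ht
  have hvle : ∀ m : ℕ, v m ≤ t ^ m / (Nat.factorial m : ℝ) := by
    intro m
    simp only [hv]
    split
    · have hE : Real.exp (-t) ≤ 1 := Real.exp_le_one_iff.mpr (by linarith)
      have h2 : t ^ m / (Nat.factorial (m+1) : ℝ) ≤ t ^ m / (Nat.factorial m : ℝ) :=
        (div_le_div_iff_of_pos_left (by positivity) (by positivity) (by positivity)).mpr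
          (by exact_mod_cast Nat.factorial_le (by omega))
      calc Real.exp (-t) * (t ^ m / (Nat.factorial (m+1) : ℝ))
          ≤ 1 * (t ^ m / (Nat.factorial (m+1) : ℝ)) :=
            mul_le_mul_of_nonneg_right hE (by positivity)
        _ = t ^ m / (Nat.factorial (m+1) : ℝ) := one_mul _
        _ ≤ t ^ m / (Nat.factorial m : ℝ) := h2
    · positivity
  have hv0 : ∀ m, 0 ≤ v m := by
    intro m
    simp only [hv]
    split
    · positivity
    · exact le_refl 0
  have hvS : Summable v :=
    Summable.of_nonneg_of_le hv0 hvle (Real.summable_pow_div_factorial t)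
  have hexp : Real.exp t = ∑' n : ℕ, t ^ n / (Nat.factorial n : ℝ) := by
    rw [Real.exp_eq_exp_ℝ, NormedSpace.exp_eq_tsum_div]
  have hsum_exp := Real.summable_pow_div_factorial t
  have hsplit := Summable.sum_add_tsum_nat_add (f := fun n : ℕ => t ^ n / (Nat.factorial n : ℝ))
    (k+1) hsum_exp
  have hvsplit := Summable.sum_add_tsum_nat_add (f := v) k hvS
  have hlow : ∑ i ∈ Finset.range k, v i = 0 := by
    apply Finset.sum_eq_zero
    intro i hi
    rw [Finset.mem_range] at hi
    simp only [hv]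
    rw [if_neg (by omega)]
  have hvshift : ∀ i : ℕ, v (i + k)
      = Real.exp (-t) * (t ^ (i+k) / (Nat.factorial (i+k+1) : ℝ)) := by
    intro i
    simp only [hv]
    rw [if_pos (by omega)]
  have key : t * ∑' m, v m
      = 1 - Real.exp (-t) * ∑ n ∈ Finset.range (k+1), t ^ n / (Nat.factorial n : ℝ) := by
    rw [← hvsplit, hlow, zero_add, tsum_congr hvshift, tsum_mul_left]
    have hQ : ∑' i : ℕ, t ^ (i + (k+1)) / (Nat.factorial (i + (k+1)) : ℝ)
        = Real.exp t - ∑ n ∈ Finset.range (k+1), t ^ n / (Nat.factorial n : ℝ) := by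
      rw [hexp]
      linarith [hsplit]
    have hQle : ∀ i : ℕ, t * (t ^ (i+k) / (Nat.factorial (i+k+1) : ℝ))
        = t ^ (i + (k+1)) / (Nat.factorial (i + (k+1)) : ℝ) := by
      intro i
      rw [show i + (k+1) = (i+k)+1 from by omega, pow_succ]
      ring
    calc t * (Real.exp (-t) * ∑' i : ℕ, t ^ (i+k) / (Nat.factorial (i+k+1) : ℝ))
        = Real.exp (-t) * ∑' i : ℕ, t * (t ^ (i+k) / (Nat.factorial (i+k+1) : ℝ)) := by
          rw [tsum_mul_left]
          ring
      _ = Real.exp (-t) * ∑' i : ℕ, t ^ (i + (k+1)) / (Nat.factorial (i + (k+1)) : ℝ) := by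
          rw [tsum_congr hQle]
      _ = Real.exp (-t) *
            (Real.exp t - ∑ n ∈ Finset.range (k+1), t ^ n / (Nat.factorial n : ℝ)) := by
          rw [hQ]
      _ = 1 - Real.exp (-t) * ∑ n ∈ Finset.range (k+1), t ^ n / (Nat.factorial n : ℝ) := by
          rw [mul_sub, ← Real.exp_add, neg_add_cancel, Real.exp_zero]
  have hint : (∫ s in (0:ℝ)..t, Real.exp (-s) * s ^ k / (Nat.factorial k : ℝ))
      = 1 - Real.exp (-t) * ∑ n ∈ Finset.range (k+1), t ^ n / (Nat.factorial n : ℝ) :=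
    int_exp_pow k t
  have hfinal : ∑' p : ℕ × ℕ, gterm k t p
      = (1/t) * ∫ s in (0:ℝ)..t, Real.exp (-s) * s ^ k / (Nat.factorial k : ℝ) := by
    rw [h3, tsum_congr hcol]
    have hvv : ∑' (m : ℕ),
        (if k ≤ m then Real.exp (-t) * (t ^ m / (Nat.factorial (m+1) : ℝ)) else 0)
        = ∑' m, v m := by
      apply tsum_congr
      intro m
      simp only [hv]
    rw [hvv, hint, ← key]
    field_simp
  rw [← hfinal]
  exact hmain
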